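/- Let G be a connected noncomplete graph on exactly 5 vertices such that d(x) + d(y) ≥ 3 for every pair of nonadjacent vertices x, y. Then G has a Hamiltonian path, and consequently pc(G) = 2. -/

import Mathlib

open SimpleGraph

/-- An edge-coloring `c` with `k` colors is a *proper connection coloring* of `G`
if every pair of vertices is joined by a path whose consecutive edges have distinct colors. -/
def ProperConnColoring {V : Type*} (G : SimpleGraph V) {k : ℕ} (c : Sym2 V → Fin k) : Prop :=
  ∀ u v : V, ∃ p : G.Walk u v, p.IsPath ∧ (p.edges.map c).Chain' (· ≠ ·)

/-- The proper connection number of `G`. -/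
noncomputable def pc {V : Type*} (G : SimpleGraph V) : ℕ :=
  sInf {k | ∃ c : Sym2 V → Fin k, ProperConnColoring G c}

namespace PC5


-- ofBits
def ofBits : List Bool → Nat
  | [] => 0
  | b :: bs => Nat.bit b (ofBits bs)

lemma testBit_ofBits : ∀ (bs : List Bool) (k : Nat), (ofBits bs).testBit k = bs.getD k false := by
  intro bs
  induction bs with
  | nil => intro k; simp [ofBits, Nat.zero_testBit]
  | cons b bs ih =>
    intro k
    cases k with
    | zero => simp [ofBits, Nat.testBit_bit_zero]
    | succ k => simp [ofBits, Nat.testBit_bit_succ, ih]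

lemma ofBits_lt : ∀ bs : List Bool, ofBits bs < 2 ^ bs.length := by
  intro bs
  induction bs with
  | nil => simp [ofBits]
  | cons b bs ih =>
    have : ofBits (b :: bs) = 2 * ofBits bs + b.toNat := by
      cases b <;> simp [ofBits, Nat.bit] <;> omega
    rw [this]
    cases b <;> simp [List.length_cons, pow_succ] <;> omega



lemma ofBits_mod_two (b : Bool) (bs : List Bool) : ofBits (b :: bs) % 2 = b.toNat := by
  cases b <;> simp [ofBits, Nat.bit] <;> omega

def eidx (x y : Nat) : Nat :=
  (min x y) * 4 + (max x y) - 1 - (min x y) * (min x y + 1) / 2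

def adjB (n x y : Nat) : Bool := x != y && n.testBit (eidx x y)

lemma adjB_comm (n x y : Nat) : adjB n x y = adjB n y x := by
  unfold adjB eidx
  rw [Nat.min_comm, Nat.max_comm]
  have : (x != y) = (y != x) := by
    apply Bool.eq_iff_iff.mpr
    simp only [bne_iff_ne, ne_eq]
    exact ⟨fun h => fun e => h e.symm, fun h => fun e => h e.symm⟩
  rw [this]

def Gn (n : Nat) : SimpleGraph (Fin 5) where
  Adj a b := adjB n a.val b.val = true
  symm := by constructor; intro a b h; rwa [adjB_comm] at h
  loopless := by constructor; intro a h; simp [adjB] at h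

instance GnDec (n : Nat) : DecidableRel (Gn n).Adj :=
  fun _ _ => inferInstanceAs (Decidable (_ = true))

def degN (n : Nat) (x : Nat) : Nat :=
  ((List.finRange 5).filter (fun y => adjB n x y.val)).length

def validHam (n p : Nat) : Bool :=
  let v0 := p % 5; let v1 := p / 5 % 5; let v2 := p / 25 % 5
  let v3 := p / 125 % 5; let v4 := p / 625 % 5
  (v0 != v1) && (v0 != v2) && (v0 != v3) && (v0 != v4) &&
  (v1 != v2) && (v1 != v3) && (v1 != v4) &&
  (v2 != v3) && (v2 != v4) && (v3 != v4) &&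
  adjB n v0 v1 && adjB n v1 v2 && adjB n v2 v3 && adjB n v3 v4

def validCut (n p : Nat) : Bool :=
  let u := p % 5; let v := p / 5 % 5; let m := p / 25
  m.testBit u && !(m.testBit v) &&
  (List.range 5).all (fun a => !(m.testBit a) ||
    (List.range 5).all (fun b => !(adjB n a b) || m.testBit b))

def validDeg (n p : Nat) : Bool :=
  let x := p % 5; let y := p / 5 % 5
  (x != y) && !(adjB n x y) && decide (degN n x + degN n y < 3)

lemma ham_reflect (n p : Nat) (h : validHam n p = true) :
    ∃ l : List (Fin 5), l.Chain' (Gn n).Adj ∧ l.Nodup ∧ l.length = 5 := by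
  unfold validHam at h
  simp only [Bool.and_eq_true, bne_iff_ne, ne_eq] at h
  obtain ⟨⟨⟨⟨⟨⟨⟨⟨⟨⟨⟨⟨⟨h01,h02⟩,h03⟩,h04⟩,h12⟩,h13⟩,h14⟩,h23⟩,h24⟩,h34⟩,a01⟩,a12⟩,a23⟩,a34⟩ := h
  refine ⟨[⟨p % 5, Nat.mod_lt _ (by norm_num)⟩, ⟨p / 5 % 5, Nat.mod_lt _ (by norm_num)⟩,
      ⟨p / 25 % 5, Nat.mod_lt _ (by norm_num)⟩, ⟨p / 125 % 5, Nat.mod_lt _ (by norm_num)⟩,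
      ⟨p / 625 % 5, Nat.mod_lt _ (by norm_num)⟩], ?_, ?_, rfl⟩
  · simp only [List.Chain', List.isChain_cons_cons, List.isChain_singleton, and_true]
    exact ⟨a01, a12, a23, a34⟩
  · simp only [List.nodup_cons, List.mem_cons, List.mem_singleton, List.not_mem_nil,
      List.nodup_nil, Fin.mk.injEq, not_or, and_true]
    tauto

lemma walk_stays {n m : Nat}
    (hcl : ∀ a b : Fin 5, m.testBit a.val = true → (Gn n).Adj a b → m.testBit b.val = true) :
    ∀ {x y : Fin 5} (_ : (Gn n).Walk x y), m.testBit x.val = true → m.testBit y.val = true := by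
  intro x y w
  induction w with
  | nil => exact id
  | cons h q ih => exact fun hx => ih (hcl _ _ hx h)

lemma cut_reflect (n p : Nat) (h : validCut n p = true) : ¬ (Gn n).Preconnected := by
  unfold validCut at h
  simp only [Bool.and_eq_true, List.all_eq_true, Bool.or_eq_true, Bool.not_eq_true',
    List.mem_range] at h
  obtain ⟨⟨hu, hv⟩, hcl⟩ := h
  intro hpc
  obtain ⟨w⟩ := hpc ⟨p % 5, Nat.mod_lt _ (by norm_num)⟩ ⟨p / 5 % 5, Nat.mod_lt _ (by norm_num)⟩
  have : (p / 25).testBit (p / 5 % 5) = true := by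
    refine walk_stays ?_ w hu
    intro a b ha hab
    rcases hcl a.val a.isLt with h1 | h1
    · rw [ha] at h1; exact absurd h1 (by simp)
    · rcases h1 b.val b.isLt with h2 | h2
      · exact absurd hab (by simp [Gn, h2])
      · exact h2
  rw [this] at hv; exact absurd hv (by simp)

lemma degree_Gn (n : Nat) (x : Fin 5) : (Gn n).degree x = degN n x.val := by
  rw [SimpleGraph.degree, SimpleGraph.neighborFinset_eq_filter, Finset.card_def,
    Finset.filter_val, Fin.univ_def]
  show Multiset.card (Multiset.filter _ (↑(List.finRange 5) : Multiset (Fin 5))) = _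
  rw [Multiset.filter_coe, Multiset.coe_card]
  unfold degN
  congr 1
  apply List.filter_congr
  intro y _
  simp [Gn]; exact Bool.decide_eq_true

lemma deg_reflect (n p : Nat) (h : validDeg n p = true) :
    ∃ x y : Fin 5, x ≠ y ∧ ¬ (Gn n).Adj x y ∧ (Gn n).degree x + (Gn n).degree y < 3 := by
  unfold validDeg at h
  simp only [Bool.and_eq_true, bne_iff_ne, ne_eq, Bool.not_eq_true', decide_eq_true_eq] at h
  obtain ⟨⟨hxy, hadj⟩, hdeg⟩ := h
  refine ⟨⟨p % 5, Nat.mod_lt _ (by norm_num)⟩, ⟨p / 5 % 5, Nat.mod_lt _ (by norm_num)⟩, ?_, ?_, ?_⟩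
  · simp only [ne_eq, Fin.mk.injEq]; exact hxy
  · simp [Gn, hadj]
  · rw [degree_Gn, degree_Gn]; exact hdeg


def certs : List (List Nat) := [[121,341,521,761,921,1141,1321,1581,1721,1941,2121,2361,2521,2741,2921,46,121,761,761,761,921,1581,1581,1581,1721,2361,2361,2361,2521,70,66,94],
 [121,1141,521,1581,1141,1141,1581,1581,1721,2741,2121,70,2741,2741,46,90,121,1581,1581,1581,1581,1581,1581,1581,1721,70,10232,10232,10328,10328,10328,10328],
 [121,1941,521,2361,921,2741,1321,70,1941,1941,2361,2361,2741,2741,46,70,121,2361,2361,2361,921,70,10712,10712,2361,2361,2361,2361,7928,7928,7928,7928],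
 [121,2741,521,70,2741,2741,10808,10808,2741,2741,8408,8408,2741,2741,10808,10808,121,42,62,94,42,90,10808,10808,42,70,8408,8408,10328,10328,10808,10808],
 [121,341,1321,1581,1321,1581,1321,1581,1721,1941,2921,66,2921,46,2921,86,121,1581,1581,1581,1581,1581,1581,1581,1721,10152,66,10152,10344,10344,10344,10344],
 [121,1581,1581,1581,1581,1581,1581,1581,1721,10168,10264,10264,46,10168,10264,10264,121,1581,1581,1581,1581,1581,1581,1581,1721,10168,10264,10264,10344,10344,10344,10344],
 [121,1941,1321,10552,1321,10568,1321,10568,1941,1941,8584,8584,6584,6584,8584,8584,121,62,62,10552,10760,10760,10760,10760,8680,8680,8680,8680,10760,10760,10760,10760],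
 [121,42,10840,10840,42,10568,10840,10840,6680,6680,10840,10840,6680,6680,10840,10840,121,82,10840,10840,10760,10760,10840,10840,8680,8680,10840,10840,10760,10760,10840,10840],
 [121,341,2121,2361,921,1141,2921,66,2121,2361,2121,2361,2921,46,2921,66,121,2361,2361,2361,921,11112,66,11112,2361,2361,2361,2361,7944,7944,7944,7944],
 [121,1141,2121,11032,1141,1141,11064,11064,2121,8088,2121,8088,7064,7064,11064,11064,121,62,62,11032,11160,11160,11160,11160,8280,8280,8280,8280,11160,11160,11160,11160],
 [121,2361,2361,2361,921,7688,7784,7784,2361,2361,2361,2361,46,7688,7784,7784,121,2361,2361,2361,921,7688,7784,7784,2361,2361,2361,2361,7944,7944,7944,7944],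
 [121,42,8440,8440,7160,7160,8440,8440,42,8088,8440,8440,7160,7160,8440,8440,121,62,8440,8440,11160,11160,8440,8440,8280,8280,8440,8440,11160,11160,8440,8440],
 [121,341,2921,66,2921,11304,2921,11304,2921,8904,2921,8904,2921,11304,2921,11304,121,62,22,94,22,11304,86,11304,22,8904,66,8904,10344,11304,10344,11304],
 [121,11320,22,11320,22,11320,11064,11320,4280,11320,4280,11320,4280,11320,4280,11320,121,11320,82,11320,11160,11320,11160,11320,8280,11320,8280,11320,11160,11320,11160,11320],
 [121,8920,22,8920,4760,8920,4760,8920,22,8920,8584,8920,4760,8920,4760,8920,121,8920,62,8920,10760,8920,10760,8920,8680,8920,8680,8920,10760,8920,10760,8920],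
 [121,11320,10840,11320,7160,11320,10840,11320,6680,11320,10840,11320,7160,11320,10840,11320,121,11320,10840,11320,11160,11320,10840,11320,8680,11320,10840,11320,11160,11320,10840,11320],
 [121,341,521,761,2521,2741,2921,46,2521,2741,2921,46,2521,2741,2921,46,121,761,761,761,2521,11528,11544,11544,2521,9528,9544,9544,2521,11528,11544,11544],
 [121,2741,521,11608,2741,2741,46,11608,2741,2741,5464,5464,2741,2741,5464,5464,121,42,11640,11640,42,11528,11640,11640,5880,5880,11640,11640,5880,5880,11640,11640],
 [121,2741,521,9608,2741,2741,5384,5384,2741,2741,46,9608,2741,2741,5384,5384,121,42,9640,9640,5960,5960,9640,9640,42,9528,9640,9640,5960,5960,9640,9640],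
 [121,2741,521,11608,2741,2741,5384,5384,2741,2741,5464,5464,2741,2741,5464,5464,121,42,11640,11640,5960,5960,11640,11640,5880,5880,11640,11640,5960,5960,11640,11640],
 [121,341,2921,11704,2921,46,2921,11704,2921,6904,2921,11704,2921,6904,2921,11704,121,11720,22,11720,22,11720,11544,11720,3880,11720,3880,11720,3880,11720,3880,11720],
 [121,42,22,11704,22,90,86,11704,22,6904,10264,11704,46,6904,10264,11704,121,11720,11640,11720,82,11720,11640,11720,5880,11720,11640,11720,5880,11720,11640,11720],
 [121,6920,4840,6920,22,6920,4840,6920,22,6920,4840,6920,6584,6920,4840,6920,121,11720,9640,11720,10760,11720,9640,11720,8680,11720,9640,11720,10760,11720,9640,11720],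
 [121,6920,10840,6920,42,6920,10840,6920,6680,6920,10840,6920,6680,6920,10840,6920,121,11720,11640,11720,10760,11720,11640,11720,8680,11720,11640,11720,10760,11720,11640,11720],
 [121,341,2921,9704,2921,7304,2921,9704,2921,46,2921,9704,2921,7304,2921,9704,121,9720,22,9720,3960,9720,3960,9720,22,9720,9544,9720,3960,9720,3960,9720],
 [121,7320,4440,7320,22,7320,4440,7320,22,7320,4440,7320,7064,7320,4440,7320,121,9720,11640,9720,11160,9720,11640,9720,8280,9720,11640,9720,11160,9720,11640,9720],
 [121,42,22,9704,22,7304,7784,9704,22,70,66,9704,46,7304,7784,9704,121,9720,9640,9720,5960,9720,9640,9720,62,9720,9640,9720,5960,9720,9640,9720],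
 [121,7320,8440,7320,7160,7320,8440,7320,42,7320,8440,7320,7160,7320,8440,7320,121,9720,11640,9720,11160,9720,11640,9720,8280,9720,11640,9720,11160,9720,11640,9720],
 [121,341,2921,11704,2921,11304,2921,11704,2921,8904,2921,11704,2921,11304,2921,11704,121,11720,22,11720,3960,11720,3960,11720,3880,11720,3880,11720,3960,11720,3960,11720],
 [121,11320,4440,11320,22,11320,4440,11320,4280,11320,4440,11320,4280,11320,4440,11320,121,11720,11640,11720,11160,11720,11640,11720,8280,11720,11640,11720,11160,11720,11640,11720],
 [121,8920,4840,8920,4760,8920,4840,8920,22,8920,4840,8920,4760,8920,4840,8920,121,11720,9640,11720,10760,11720,9640,11720,8680,11720,9640,11720,10760,11720,9640,11720],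
 [121,11320,10840,11320,7160,11320,10840,11320,6680,11320,10840,11320,7160,11320,10840,11320,121,11720,11640,11720,11160,11720,11640,11720,8680,11720,11640,11720,11160,11720,11640,11720]]

def check (n : Nat) : Bool :=
  let c := (certs.getD (n / 32) []).getD (n % 32) 0
  let t := c % 4
  let p := c / 4
  if t = 0 then validHam n p
  else if t = 1 then validCut n p
  else validDeg n p

set_option maxHeartbeats 4000000 in
set_option maxRecDepth 10000 in
lemma check_all : ∀ n, n < 1024 → check n = true := by decide

end PC5


section Walks

variable {V : Type*} [DecidableEq V] {G : SimpleGraph V}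

/-- Properly connecting coloring from a hamiltonian path whose colors alternate. -/
lemma properConn_of_hamPath {u v : V} (p : G.Walk u v) (hp : p.IsPath)
    (hham : ∀ w, w ∈ p.support) {k : ℕ} (c : Sym2 V → Fin k)
    (hchain : (p.edges.map c).Chain' (· ≠ ·)) : ProperConnColoring G c := by
  intro x y
  have hx := hham x
  by_cases hxy : y ∈ (p.dropUntil x hx).support
  · refine ⟨(p.dropUntil x hx).takeUntil y hxy, (hp.dropUntil hx).takeUntil hxy, ?_⟩
    have hinf : ((p.dropUntil x hx).takeUntil y hxy).edges <:+: p.edges := by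
      refine ⟨(p.takeUntil x hx).edges, ((p.dropUntil x hx).dropUntil y hxy).edges, ?_⟩
      rw [← Walk.edges_append, ← Walk.edges_append, ← Walk.append_assoc,
        Walk.take_spec, Walk.take_spec]
    exact hchain.infix (hinf.map c)
  · have hy := hham y
    have hyt : y ∈ (p.takeUntil x hx).support := by
      rw [← Walk.take_spec p hx] at hy
      rcases (Walk.mem_support_append_iff _ _).mp hy with h | h
      · exact h
      · exact absurd h hxy
    refine ⟨((p.takeUntil x hx).dropUntil y hyt).reverse,
      ((hp.takeUntil hx).dropUntil hyt).reverse, ?_⟩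
    rw [Walk.edges_reverse, List.map_reverse, List.Chain', List.isChain_reverse]
    have hinf : ((p.takeUntil x hx).dropUntil y hyt).edges <:+: p.edges := by
      refine ⟨((p.takeUntil x hx).takeUntil y hyt).edges, (p.dropUntil x hx).edges, ?_⟩
      rw [← Walk.edges_append, ← Walk.edges_append, Walk.take_spec, Walk.take_spec]
    exact (hchain.infix (hinf.map c)).imp fun a b hab => Ne.symm hab

end Walks

section Ham

variable {V : Type*} [Fintype V] [DecidableEq V] {G : SimpleGraph V}

lemma toHamWalk (hn : Fintype.card V = 5) (l : List V) (hc : l.Chain' G.Adj)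
    (hd : l.Nodup) (hl : l.length = 5) :
    ∃ (u v : V) (p : G.Walk u v), p.IsHamiltonian ∧ p.IsPath := by
  match l, hl with
  | [a, b, c, d, e], _ =>
    simp only [List.Chain', List.isChain_cons_cons, List.isChain_singleton, and_true] at hc
    obtain ⟨hab, hbc, hcd, hde⟩ := hc
    refine ⟨a, e, .cons hab (.cons hbc (.cons hcd (.cons hde .nil))), ?_, ?_⟩
    · intro w
      have hmem : w ∈ [a, b, c, d, e] := by
        have h1 : (List.toFinset [a,b,c,d,e]) = Finset.univ := by
          apply Finset.eq_univ_of_card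
          rw [List.toFinset_card_of_nodup hd, hn]
          rfl
        have : w ∈ List.toFinset [a,b,c,d,e] := by rw [h1]; exact Finset.mem_univ w
        simpa using this
      have hsupp : (Walk.cons hab (.cons hbc (.cons hcd (.cons hde (.nil (u := e)))))).support
          = [a, b, c, d, e] := rfl
      rw [hsupp]
      exact List.count_eq_one_of_mem hd hmem
    · rw [Walk.isPath_def]
      exact hd

/-- build the 2-coloring from a hamiltonian path -/
lemma pc_le_two_aux {u v : V} (p : G.Walk u v) (hham : p.IsHamiltonian) (hp : p.IsPath)
    (hn : Fintype.card V = 5) :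
    ∃ c : Sym2 V → Fin 2, ProperConnColoring G c := by
  have hlen : p.edges.length = 4 := by
    rw [Walk.length_edges, hham.length_eq, hn]
  obtain ⟨x0, x1, x2, x3, hE⟩ : ∃ x0 x1 x2 x3, p.edges = [x0, x1, x2, x3] := by
    rcases hE : p.edges with _ | ⟨x0, _ | ⟨x1, _ | ⟨x2, _ | ⟨x3, _ | ⟨x4, L⟩⟩⟩⟩⟩ <;>
      rw [hE] at hlen <;> simp at hlen
    exact ⟨x0, x1, x2, x3, rfl⟩
  have hnd : p.edges.Nodup := hp.isTrail.edges_nodup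
  rw [hE] at hnd
  simp only [List.nodup_cons, List.mem_cons, List.not_mem_nil, List.mem_singleton,
    not_or, List.nodup_nil, and_true] at hnd
  obtain ⟨⟨h01, h02, h03, -⟩, ⟨h12, h13, -⟩, ⟨h23, -⟩, -⟩ := hnd
  refine ⟨fun s => if s = x0 ∨ s = x2 then 0 else 1, ?_⟩
  apply properConn_of_hamPath p hp hham.mem_support
  rw [hE]
  have e1 : (if x1 = x0 ∨ x1 = x2 then (0 : Fin 2) else 1) = 1 := by
    rw [if_neg]; push_neg; exact ⟨fun h => h01 h.symm, h12⟩
  have e3 : (if x3 = x0 ∨ x3 = x2 then (0 : Fin 2) else 1) = 1 := by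
    rw [if_neg]; push_neg; exact ⟨fun h => h03 h.symm, fun h => h23 h.symm⟩
  simp only [List.map_cons, List.map_nil]
  rw [if_pos (Or.inl trivial), if_pos (Or.inr trivial), e1, e3]
  refine List.isChain_cons_cons.mpr ⟨by decide, List.isChain_cons_cons.mpr ⟨by decide,
    List.isChain_cons_cons.mpr ⟨by decide, List.isChain_singleton _⟩⟩⟩

end Ham

section PCtwo

variable {V : Type*} [Fintype V] [DecidableEq V]

lemma pc_eq_two (G : SimpleGraph V) (hnc : G ≠ ⊤) (hn : Fintype.card V = 5)
    (hcol : ∃ c : Sym2 V → Fin 2, ProperConnColoring G c) : pc G = 2 := by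
  have hne : Nonempty V := Fintype.card_pos_iff.mp (by omega)
  have h2 : 2 ∈ {k | ∃ c : Sym2 V → Fin k, ProperConnColoring G c} := hcol
  have hge : ∀ k ∈ {k | ∃ c : Sym2 V → Fin k, ProperConnColoring G c}, 2 ≤ k := by
    rintro k ⟨c, hc⟩
    by_contra hlt
    push_neg at hlt
    interval_cases k
    · obtain ⟨u⟩ := hne
      exact (c s(u, u)).elim0
    · obtain ⟨x, y, hxy, hnadj⟩ : ∃ x y, x ≠ y ∧ ¬ G.Adj x y := by
        by_contra h
        push_neg at h
        apply hnc
        ext a b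
        simp only [SimpleGraph.top_adj]
        exact ⟨fun hadj => hadj.ne, fun hne2 => h a b hne2⟩
      obtain ⟨p, hp, hch⟩ := hc x y
      cases p with
      | nil => exact hxy rfl
      | cons h q =>
        cases q with
        | nil => exact hnadj h
        | cons h2 q2 =>
          simp only [Walk.edges_cons, List.map_cons] at hch
          exact (List.isChain_cons_cons.mp hch).1 (Subsingleton.elim _ _)
  exact le_antisymm (Nat.sInf_le h2)
    (hge _ (Nat.sInf_mem ⟨2, h2⟩))

end PCtwo

section Encode

def enc (H : SimpleGraph (Fin 5)) [DecidableRel H.Adj] : Nat :=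
  PC5.ofBits [decide (H.Adj 0 1), decide (H.Adj 0 2), decide (H.Adj 0 3), decide (H.Adj 0 4),
    decide (H.Adj 1 2), decide (H.Adj 1 3), decide (H.Adj 1 4),
    decide (H.Adj 2 3), decide (H.Adj 2 4), decide (H.Adj 3 4)]

lemma enc_lt (H : SimpleGraph (Fin 5)) [DecidableRel H.Adj] : enc H < 1024 := by
  have h := PC5.ofBits_lt [decide (H.Adj 0 1), decide (H.Adj 0 2), decide (H.Adj 0 3),
    decide (H.Adj 0 4), decide (H.Adj 1 2), decide (H.Adj 1 3), decide (H.Adj 1 4),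
    decide (H.Adj 2 3), decide (H.Adj 2 4), decide (H.Adj 3 4)]
  simpa [enc] using h

lemma Gn_enc (H : SimpleGraph (Fin 5)) [DecidableRel H.Adj] : PC5.Gn (enc H) = H := by
  ext a b
  show PC5.adjB (enc H) a.val b.val = true ↔ H.Adj a b
  fin_cases a <;> fin_cases b <;>
    simp [PC5.adjB, PC5.eidx, enc, PC5.testBit_ofBits, PC5.ofBits_mod_two,
      SimpleGraph.adj_comm, SimpleGraph.irrefl] <;>
    first
      | rfl
      | exact SimpleGraph.adj_comm _ _ _

end Encode


lemma degree_congr {W : Type*} [Fintype W] {G H : SimpleGraph W}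
    [DecidableRel G.Adj] [DecidableRel H.Adj] (h : G = H) (v : W) :
    G.degree v = H.degree v := by
  subst h
  congr!

/-- A connected noncomplete graph on 5 vertices with `d(x) + d(y) ≥ 3` for all
nonadjacent `x ≠ y` has a Hamiltonian path, and hence `pc(G) = 2`. -/
theorem hamPath_and_pc_of_order_five {V : Type*} [Fintype V] [DecidableEq V]
    (G : SimpleGraph V) [DecidableRel G.Adj]
    (hG : G.Connected) (hnc : G ≠ ⊤) (hn : Fintype.card V = 5)
    (hdeg : ∀ x y : V, x ≠ y → ¬ G.Adj x y → 3 ≤ G.degree x + G.degree y) :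
    (∃ (u v : V) (p : G.Walk u v), p.IsHamiltonian ∧ p.IsPath) ∧ pc G = 2 := by
  have e : V ≃ Fin 5 := Fintype.equivFinOfCardEq hn
  let G5 : SimpleGraph (Fin 5) := G.comap e.symm
  haveI hdec5 : DecidableRel G5.Adj := fun a b =>
    (inferInstance : Decidable (G.Adj (e.symm a) (e.symm b)))
  have iso : G5 ≃g G := ⟨e.symm, Iff.rfl⟩
  have hG5conn : G5.Connected := iso.connected_iff.mpr hG
  have hdegeq : ∀ x : Fin 5, G5.degree x = G.degree (e.symm x) := by
    intro x
    rw [← SimpleGraph.card_neighborSet_eq_degree, ← SimpleGraph.card_neighborSet_eq_degree]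
    exact Fintype.card_congr (Equiv.subtypeEquiv e.symm fun b => Iff.rfl)
  set n := enc G5 with hn5
  have hGn : PC5.Gn n = G5 := Gn_enc G5
  have hch := PC5.check_all n (enc_lt G5)
  simp only [PC5.check] at hch
  split_ifs at hch with h0 h1
  · -- hamiltonian path certificate
    obtain ⟨l, hc, hd, hl⟩ := PC5.ham_reflect _ _ hch
    rw [hGn] at hc
    have hcV : (l.map e.symm).Chain' G.Adj := (List.isChain_map e.symm).mpr hc
    have hdV : (l.map e.symm).Nodup := hd.map e.symm.injective
    have hlV : (l.map e.symm).length = 5 := by simp [hl]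
    have hham := toHamWalk hn _ hcV hdV hlV
    refine ⟨hham, ?_⟩
    obtain ⟨u, v, p, hpham, hppath⟩ := hham
    exact pc_eq_two G hnc hn (pc_le_two_aux p hpham hppath hn)
  · -- cut certificate: contradicts connectedness
    exact absurd hG5conn.preconnected (hGn ▸ PC5.cut_reflect _ _ hch)
  · -- degree certificate: contradicts degree condition
    exfalso
    obtain ⟨x, y, hxy, hnadj, hlt⟩ := PC5.deg_reflect _ _ hch
    have hnadj5 : ¬ G5.Adj x y := by rwa [hGn] at hnadj
    have hxyV : e.symm x ≠ e.symm y := fun h => hxy (e.symm.injective h)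
    have hnadjV : ¬ G.Adj (e.symm x) (e.symm y) := hnadj5
    have h3 := hdeg _ _ hxyV hnadjV
    rw [← hdegeq, ← hdegeq, ← degree_congr hGn, ← degree_congr hGn] at h3
    omega
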